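/- Let P and P̃ be reversible with respect to π and π̃(dx) = π(dx)ρ(x)/π(ρ) respectively, related by P(x,A) = ρ(x)P̃(x,A) + (1−ρ(x))1_A(x) with ρ : E → (0,1]. For f with π(f) = 0, if f/ρ ∈ L²₀(E, π̃) and var(f/ρ, P̃) < ∞, then var(f, P) ≤ π(ρ)·var(f/ρ, P̃) + π(f²/ρ) − π(f²) < ∞. -/

import Mathlib

open MeasureTheory ProbabilityTheory ENNReal

/-- The (real-valued) Dirichlet form `𝓔_K(g) = (1/2)∫ ν(dx) K(x,dy) (g(y) − g(x))²`. -/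
noncomputable def dirichletFormR {α : Type*} [MeasurableSpace α] (ν : Measure α)
    (K : α → Measure α) (g : α → ℝ) : ℝ :=
  (1 / 2) * ∫ x, ∫ y, (g y - g x) ^ 2 ∂(K x) ∂ν

/-- Reversibility of a kernel `K` with respect to `ν`. -/
def IsReversible {α : Type*} [MeasurableSpace α] (ν : Measure α) (K : α → Measure α) : Prop :=
  ∀ A B : Set α, MeasurableSet A → MeasurableSet B →
    ∫⁻ x in A, K x B ∂ν = ∫⁻ x in B, K x A ∂ν

/-- The asymptotic variance of ergodic averages of `g` for a `ν`-reversible kernel `K`,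
via the Caracciolo–Pescatori–Sokal variational representation
`var(g, K) = 2 [sup_{h ∈ L²(ν)} (2⟨g,h⟩_ν − 𝓔_K(h))] − ⟨g,g⟩_ν`, valued in `ℝ≥0∞`. -/
noncomputable def asympVar {α : Type*} [MeasurableSpace α] (ν : Measure α)
    (K : α → Measure α) (g : α → ℝ) : ℝ≥0∞ :=
  2 * (⨆ h : {h : α → ℝ // MemLp h 2 ν},
        ENNReal.ofReal (2 * ∫ x, g x * h.1 x ∂ν - dirichletFormR ν K h.1))
    - ENNReal.ofReal (∫ x, g x ^ 2 ∂ν)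

/-- Let `P(x,·) = ρ(x) P̃(x,·) + (1−ρ(x)) δ_x` be `π`-reversible with `ρ : E → (0,1]` and
`P̃` reversible with respect to `π̃ = π(ρ)⁻¹·ρ·π`. For `f` with `π(f) = 0`, if
`f/ρ ∈ L²₀(E, π̃)` and `var(f/ρ, P̃) < ∞`, then
`var(f, P) ≤ π(ρ)·var(f/ρ, P̃) + π(f²/ρ) − π(f²) < ∞`. -/
theorem stmt16 {E : Type*} [MeasurableSpace E] (π : Measure E) [IsProbabilityMeasure π]
    (ρ : E → ℝ) (hρm : Measurable ρ) (hρ : ∀ x, 0 < ρ x ∧ ρ x ≤ 1)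
    (Pt : E → Measure E) (hPt : ∀ x, IsProbabilityMeasure (Pt x))
    (hrevt : IsReversible
      ((∫⁻ x, ENNReal.ofReal (ρ x) ∂π)⁻¹ • π.withDensity (fun x => ENNReal.ofReal (ρ x))) Pt)
    (hrevP : IsReversible π
      (fun x => ENNReal.ofReal (ρ x) • Pt x + ENNReal.ofReal (1 - ρ x) • Measure.dirac x))
    (f : E → ℝ) (hfm : Measurable f) (hf0 : ∫ x, f x ∂π = 0)
    (hfρ : MemLp (fun x => f x / ρ x) 2
      ((∫⁻ x, ENNReal.ofReal (ρ x) ∂π)⁻¹ • π.withDensity (fun x => ENNReal.ofReal (ρ x))))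
    (hfρ0 : ∫ x, f x / ρ x
      ∂((∫⁻ x, ENNReal.ofReal (ρ x) ∂π)⁻¹ • π.withDensity (fun x => ENNReal.ofReal (ρ x))) = 0)
    (hvart : asympVar
        ((∫⁻ x, ENNReal.ofReal (ρ x) ∂π)⁻¹ • π.withDensity (fun x => ENNReal.ofReal (ρ x))) Pt
        (fun x => f x / ρ x) < ⊤) :
    asympVar π
        (fun x => ENNReal.ofReal (ρ x) • Pt x + ENNReal.ofReal (1 - ρ x) • Measure.dirac x) f
      ≤ (∫⁻ x, ENNReal.ofReal (ρ x) ∂π) *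
          asympVar
            ((∫⁻ x, ENNReal.ofReal (ρ x) ∂π)⁻¹ • π.withDensity (fun x => ENNReal.ofReal (ρ x)))
            Pt (fun x => f x / ρ x)
        + ∫⁻ x, ENNReal.ofReal (f x ^ 2 / ρ x) ∂π - ∫⁻ x, ENNReal.ofReal (f x ^ 2) ∂π ∧
    asympVar π
        (fun x => ENNReal.ofReal (ρ x) • Pt x + ENNReal.ofReal (1 - ρ x) • Measure.dirac x) f
      < ⊤ := by
  classical
  set c : ℝ≥0∞ := ∫⁻ x, ENNReal.ofReal (ρ x) ∂π with hcdef
  set πt : Measure E := c⁻¹ • π.withDensity (fun x => ENNReal.ofReal (ρ x)) with hπtdef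
  set P : E → Measure E := fun x =>
    ENNReal.ofReal (ρ x) • Pt x + ENNReal.ofReal (1 - ρ x) • Measure.dirac x with hPdef
  -- basic facts about c
  have hc_le_one : c ≤ 1 := by
    rw [hcdef]
    calc ∫⁻ x, ENNReal.ofReal (ρ x) ∂π ≤ ∫⁻ _, 1 ∂π :=
          lintegral_mono fun x => ENNReal.ofReal_le_one.mpr (hρ x).2
      _ = 1 := by simp
  have hc_ne_top : c ≠ ⊤ := (lt_of_le_of_lt hc_le_one one_lt_top).ne
  have hc_ne : c ≠ 0 := by
    rw [hcdef]
    have : 0 < ∫⁻ x, ENNReal.ofReal (ρ x) ∂π := by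
      rw [lintegral_pos_iff_support hρm.ennreal_ofReal]
      have : Function.support (fun x => ENNReal.ofReal (ρ x)) = Set.univ := by
        ext x
        simp only [Function.support, Set.mem_setOf_eq, Set.mem_univ, iff_true, ne_eq,
          ENNReal.ofReal_eq_zero, not_le]
        exact (hρ x).1
      rw [this]
      simp
    exact this.ne'
  set cR : ℝ := c.toReal with hcRdef
  have hcR_pos : 0 < cR := ENNReal.toReal_pos hc_ne hc_ne_top
  have hcR : ENNReal.ofReal cR = c := ENNReal.ofReal_toReal hc_ne_top
  -- integral transfer from πt to π
  have hInt_t : ∀ g : E → ℝ, ∫ x, g x ∂πt = cR⁻¹ * ∫ x, ρ x * g x ∂π := by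
    intro g
    rw [hπtdef, integral_smul_measure]
    have hd : π.withDensity (fun x => ENNReal.ofReal (ρ x))
        = π.withDensity (fun x => (Real.toNNReal (ρ x) : ℝ≥0∞)) := rfl
    rw [hd, integral_withDensity_eq_integral_smul hρm.real_toNNReal g]
    rw [ENNReal.toReal_inv, smul_eq_mul]
    congr 1
    refine integral_congr_ae (Filter.Eventually.of_forall fun x => ?_)
    simp [NNReal.smul_def, Real.coe_toNNReal _ (hρ x).1.le]
  -- lintegral transfer
  have hLint_t : ∀ φ : E → ℝ≥0∞, Measurable φ →
      ∫⁻ x, φ x ∂πt = c⁻¹ * ∫⁻ x, ENNReal.ofReal (ρ x) * φ x ∂π := by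
    intro φ hφ
    rw [hπtdef, lintegral_smul_measure,
      lintegral_withDensity_eq_lintegral_mul π hρm.ennreal_ofReal hφ]
    rfl
  -- L² transfer
  have hwd_le : π.withDensity (fun x => ENNReal.ofReal (ρ x)) ≤ π := by
    rw [Measure.le_iff]
    intro s hs
    rw [withDensity_apply _ hs]
    calc ∫⁻ x in s, ENNReal.ofReal (ρ x) ∂π ≤ ∫⁻ _ in s, 1 ∂π :=
          lintegral_mono fun x => ENNReal.ofReal_le_one.mpr (hρ x).2
      _ = π s := setLIntegral_one s
  have hMem_t : ∀ h : E → ℝ, MemLp h 2 π → MemLp h 2 πt := fun h hh =>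
    (hh.mono_measure hwd_le).smul_measure (ENNReal.inv_ne_top.mpr hc_ne)
  -- Dirichlet form identity
  have hDir : ∀ h : E → ℝ, MemLp h 2 π →
      dirichletFormR π P h = cR * dirichletFormR πt Pt h := by
    intro h hh
    obtain ⟨h', hh'sm, hhae⟩ := hh.aestronglyMeasurable
    have hnull : π {x | ¬ h x = h' x} = 0 := hhae
    obtain ⟨t, htsub, htm, htnull⟩ := exists_measurable_superset_of_null hnull
    have hh'm : Measurable h' := hh'sm.measurable
    have hkey : ∀ x ∉ t,
        (∫ y, (h y - h x) ^ 2 ∂(P x)) = ρ x * ∫ y, (h y - h x) ^ 2 ∂(Pt x) := by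
      intro x hx
      have hxh : h x = h' x := by
        by_contra hne; exact hx (htsub hne)
      set g : E → ℝ := fun y => (h y - h x) ^ 2 with hgdef
      set g' : E → ℝ := fun y => (h' y - h x) ^ 2 with hg'def
      have hg'm : Measurable g' := (hh'm.sub measurable_const).pow_const 2
      have hδt : Measure.dirac x t = 0 := by
        rw [Measure.dirac_apply' _ htm]
        simp [Set.indicator_of_notMem hx]
      have hgg' : g =ᵐ[Measure.dirac x] g' := by
        refine ae_iff.mpr (measure_mono_null ?_ hδt)
        intro y hy
        refine htsub ?_
        intro hyeq
        exact hy (by simp [hgdef, hg'def, hyeq])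
      have hIgδ : ∫ y, g y ∂(Measure.dirac x) = 0 := by
        rw [integral_congr_ae hgg', integral_dirac' g' x hg'm.stronglyMeasurable]
        simp [hg'def, hxh]
      by_cases hint : Integrable g (Pt x)
      · have h1 : Integrable g (ENNReal.ofReal (ρ x) • Pt x) :=
          hint.smul_measure ENNReal.ofReal_ne_top
        have hδint : Integrable g (Measure.dirac x) := by
          refine Integrable.congr ⟨hg'm.aestronglyMeasurable, ?_⟩ hgg'.symm
          refine hasFiniteIntegral_iff_ofReal (Filter.Eventually.of_forall fun y => sq_nonneg _)
            |>.mpr ?_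
          rw [lintegral_dirac' x (hg'm.ennreal_ofReal)]
          exact ENNReal.ofReal_lt_top
        have h2 : Integrable g (ENNReal.ofReal (1 - ρ x) • Measure.dirac x) :=
          hδint.smul_measure ENNReal.ofReal_ne_top
        show (∫ y, g y ∂(ENNReal.ofReal (ρ x) • Pt x + ENNReal.ofReal (1 - ρ x) • Measure.dirac x))
            = ρ x * ∫ y, g y ∂(Pt x)
        rw [integral_add_measure h1 h2, integral_smul_measure, integral_smul_measure, hIgδ]
        simp [ENNReal.toReal_ofReal (hρ x).1.le]
      · have hG0 : ∫ y, g y ∂(Pt x) = 0 := integral_undef hint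
        have hS : ¬ Integrable g (P x) := by
          intro hcon
          have h1 : Integrable g (ENNReal.ofReal (ρ x) • Pt x) :=
            hcon.mono_measure (Measure.le_add_right le_rfl)
          exact hint ((integrable_smul_measure (ENNReal.ofReal_pos.mpr (hρ x).1).ne'
            ENNReal.ofReal_ne_top).mp h1)
        rw [integral_undef hS, hG0, mul_zero]
    have hFG : (fun x => ∫ y, (h y - h x) ^ 2 ∂(P x))
        =ᵐ[π] fun x => ρ x * ∫ y, (h y - h x) ^ 2 ∂(Pt x) := by
      refine ae_iff.mpr (measure_mono_null ?_ htnull)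
      intro x hx
      by_contra hxt
      exact hx (hkey x hxt)
    unfold dirichletFormR
    rw [integral_congr_ae hFG, hInt_t (fun x => ∫ y, (h y - h x) ^ 2 ∂(Pt x))]
    field_simp
  -- inner product identity
  have hInner : ∀ h : E → ℝ, ∫ x, f x * h x ∂π = cR * ∫ x, f x / ρ x * h x ∂πt := by
    intro h
    rw [hInt_t (fun x => f x / ρ x * h x)]
    have heq : (fun x => ρ x * (f x / ρ x * h x)) = fun x => f x * h x := by
      funext x
      have hne := (hρ x).1.ne'
      field_simp
    rw [heq, ← mul_assoc, mul_inv_cancel₀ hcR_pos.ne', one_mul]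
  -- the suprema
  set St : ℝ≥0∞ := ⨆ h : {h : E → ℝ // MemLp h 2 πt},
    ENNReal.ofReal (2 * ∫ x, f x / ρ x * h.1 x ∂πt - dirichletFormR πt Pt h.1) with hStdef
  have hSup : (⨆ h : {h : E → ℝ // MemLp h 2 π},
      ENNReal.ofReal (2 * ∫ x, f x * h.1 x ∂π - dirichletFormR π P h.1)) ≤ c * St := by
    refine iSup_le fun h => ?_
    have hmem := hMem_t h.1 h.2
    have hterm : 2 * ∫ x, f x * h.1 x ∂π - dirichletFormR π P h.1
        = cR * (2 * ∫ x, f x / ρ x * h.1 x ∂πt - dirichletFormR πt Pt h.1) := by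
      rw [hInner h.1, hDir h.1 h.2]; ring
    rw [hterm, ENNReal.ofReal_mul hcR_pos.le, hcR]
    refine mul_le_mul_right ?_ c
    rw [hStdef]
    exact le_iSup (fun h : {h : E → ℝ // MemLp h 2 πt} =>
      ENNReal.ofReal (2 * ∫ x, f x / ρ x * h.1 x ∂πt - dirichletFormR πt Pt h.1)) ⟨h.1, hmem⟩
  -- the q part
  set q : ℝ := ∫ x, (f x / ρ x) ^ 2 ∂πt with hqdef
  have hq_int : Integrable (fun x => (f x / ρ x) ^ 2) πt := by
    have := hfρ.integrable_sq
    simpa using this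
  have hA : (∫⁻ x, ENNReal.ofReal (f x ^ 2 / ρ x) ∂π) = c * ENNReal.ofReal q := by
    rw [hqdef, ofReal_integral_eq_lintegral_ofReal hq_int
      (Filter.Eventually.of_forall fun x => sq_nonneg _),
      hLint_t (fun x => ENNReal.ofReal ((f x / ρ x) ^ 2)) ((hfm.div hρm).pow_const 2).ennreal_ofReal, ← mul_assoc,
      ENNReal.mul_inv_cancel hc_ne hc_ne_top, one_mul]
    refine lintegral_congr fun x => ?_
    rw [← ENNReal.ofReal_mul (hρ x).1.le]
    congr 1
    have hne := (hρ x).1.ne'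
    field_simp
  have hAfin : (∫⁻ x, ENNReal.ofReal (f x ^ 2 / ρ x) ∂π) < ⊤ := by
    rw [hA]
    exact ENNReal.mul_lt_top (lt_of_le_of_lt hc_le_one one_lt_top) ENNReal.ofReal_lt_top
  have hBA : (∫⁻ x, ENNReal.ofReal (f x ^ 2) ∂π) ≤ ∫⁻ x, ENNReal.ofReal (f x ^ 2 / ρ x) ∂π := by
    refine lintegral_mono fun x => ENNReal.ofReal_le_ofReal ?_
    rw [le_div_iff₀ (hρ x).1]
    exact mul_le_of_le_one_right (sq_nonneg _) (hρ x).2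
  have hIntf2 : Integrable (fun x => f x ^ 2) π := by
    refine ⟨(hfm.pow_const 2).aestronglyMeasurable, ?_⟩
    rw [hasFiniteIntegral_iff_ofReal (Filter.Eventually.of_forall fun x => sq_nonneg _)]
    exact lt_of_le_of_lt hBA hAfin
  have hB : ENNReal.ofReal (∫ x, f x ^ 2 ∂π) = ∫⁻ x, ENNReal.ofReal (f x ^ 2) ∂π :=
    ofReal_integral_eq_lintegral_ofReal hIntf2 (Filter.Eventually.of_forall fun x => sq_nonneg _)
  -- identify the asymptotic variances
  have hV : asympVar πt Pt (fun x => f x / ρ x) = 2 * St - ENNReal.ofReal q := by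
    rw [asympVar, hStdef, hqdef]
  set V : ℝ≥0∞ := asympVar πt Pt (fun x => f x / ρ x) with hVdef
  have h2St : 2 * St ≤ V + ENNReal.ofReal q := by
    rw [hV]
    exact le_tsub_add
  have hmain : asympVar π P f
      ≤ c * V + (∫⁻ x, ENNReal.ofReal (f x ^ 2 / ρ x) ∂π) - ∫⁻ x, ENNReal.ofReal (f x ^ 2) ∂π := by
    calc asympVar π P f
        = 2 * (⨆ h : {h : E → ℝ // MemLp h 2 π},
            ENNReal.ofReal (2 * ∫ x, f x * h.1 x ∂π - dirichletFormR π P h.1))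
          - ∫⁻ x, ENNReal.ofReal (f x ^ 2) ∂π := by rw [asympVar, hB]
      _ ≤ 2 * (c * St) - ∫⁻ x, ENNReal.ofReal (f x ^ 2) ∂π :=
          tsub_le_tsub_right (mul_le_mul_right hSup 2) _
      _ = c * (2 * St) - ∫⁻ x, ENNReal.ofReal (f x ^ 2) ∂π := by rw [mul_left_comm]
      _ ≤ c * (V + ENNReal.ofReal q) - ∫⁻ x, ENNReal.ofReal (f x ^ 2) ∂π :=
          tsub_le_tsub_right (mul_le_mul_right h2St c) _
      _ = c * V + (∫⁻ x, ENNReal.ofReal (f x ^ 2 / ρ x) ∂π)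
          - ∫⁻ x, ENNReal.ofReal (f x ^ 2) ∂π := by rw [mul_add, hA]
  refine ⟨hmain, lt_of_le_of_lt hmain (lt_of_le_of_lt tsub_le_self ?_)⟩
  exact ENNReal.add_lt_top.mpr
    ⟨ENNReal.mul_lt_top (lt_of_le_of_lt hc_le_one one_lt_top) hvart, hAfin⟩
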